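/- Let k ≥ 1, let V be a vector space over ℂ with a basis (v_i) indexed by ℤ/kℤ, and let X, Y be commuting nilpotent linear endomorphisms of V such that for every i ∈ ℤ/kℤ, X v_i lies in the line spanned by v_{i+1} and Y v_i lies in the line spanned by v_{i−1}. Then X ∘ Y = 0. (This is the Proposition that for a nilpotent G-constellation F for the cyclic group G = ℤ/kℤ ⊂ SL(2,ℂ), the endomorphism 'multiplication by xy' is the zero endomorphism.) -/

import Mathlib

/-- Let `k ≥ 1`, let `V` be a `ℂ`-vector space with a basis `(v i)` indexed by
`ℤ/kℤ`, and let `X`, `Y` be commuting nilpotent linear endomorphisms of `V` such that for every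
`i`, `X (v i)` lies in the line spanned by `v (i+1)` and `Y (v i)` lies in the line spanned by
`v (i-1)`.  Then `X ∘ Y = 0`.  (For a nilpotent `G`-constellation, multiplication by `xy` is the
zero endomorphism.) -/
theorem stmt0 (k : ℕ) (hk : 1 ≤ k) (V : Type*) [AddCommGroup V] [Module ℂ V]
    (v : Module.Basis (ZMod k) ℂ V) (X Y : Module.End ℂ V)
    (hcomm : Commute X Y) (hX : IsNilpotent X) (hY : IsNilpotent Y)
    (hXv : ∀ i : ZMod k, X (v i) ∈ Submodule.span ℂ {v (i + 1)})
    (hYv : ∀ i : ZMod k, Y (v i) ∈ Submodule.span ℂ {v (i - 1)}) :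
    X ∘ₗ Y = (0 : Module.End ℂ V) := by
  have hXY : IsNilpotent (X * Y) := hcomm.isNilpotent_mul_right hX
  obtain ⟨n, hn⟩ := hXY
  replace hn : (X * Y) ^ (n + 1) = 0 := by rw [pow_succ, hn, zero_mul]
  apply Module.Basis.ext v
  intro i
  -- diagonal entry
  obtain ⟨b, hb⟩ := Submodule.mem_span_singleton.mp (hYv i)
  obtain ⟨a, ha⟩ := Submodule.mem_span_singleton.mp (hXv (i - 1))
  rw [sub_add_cancel] at ha
  have hdiag : (X * Y) (v i) = (b * a) • v i := by
    simp only [Module.End.mul_apply, ← hb.symm]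
    rw [← hb, map_smul, ← ha, smul_smul]
  have hpow : ∀ m : ℕ, ((X * Y) ^ m) (v i) = (b * a) ^ m • v i := by
    intro m
    induction m with
    | zero => simp
    | succ m ih =>
      rw [pow_succ, Module.End.mul_apply, hdiag, map_smul, ih, smul_smul, ← pow_succ']
  have h0 : (b * a) ^ (n + 1) • v i = 0 := by rw [← hpow, hn]; rfl
  have hba : b * a = 0 := by
    rcases smul_eq_zero.mp h0 with h | h
    · exact pow_eq_zero_iff (Nat.succ_ne_zero n) |>.mp h
    · exact absurd h (v.ne_zero i)
  simp only [LinearMap.comp_apply, LinearMap.zero_apply]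
  rw [show X (Y (v i)) = (X * Y) (v i) from rfl, hdiag, hba, zero_smul]
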